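/- The function Φ_d(x) = x²(log(1+x))^{d-1} is convex on [0,∞), for every integer d ≥ 1. -/

import Mathlib

open Real Set

private lemma d1 (k : ℕ) {x : ℝ} (hx : (0:ℝ) < 1 + x) :
    HasDerivAt (fun y : ℝ => y ^ 2 * Real.log (1 + y) ^ k)
      (2 * x * Real.log (1 + x) ^ k
        + x ^ 2 * ((k : ℝ) * Real.log (1 + x) ^ (k - 1) * (1 + x)⁻¹)) x := by
  have h1 : HasDerivAt (fun y : ℝ => 1 + y) 1 x := by
    simpa using (hasDerivAt_id x).const_add 1
  have hlog : HasDerivAt (fun y : ℝ => Real.log (1 + y)) ((1 + x)⁻¹) x := by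
    exact ((Real.hasDerivAt_log (ne_of_gt hx)).comp x h1).congr_deriv (mul_one _)
  have := (hasDerivAt_pow 2 x).mul (hlog.pow k)
  refine this.congr_deriv ?_
  push_cast
  simp only [Pi.pow_apply]
  ring

private lemma d2 (k : ℕ) {x : ℝ} (hx : (0:ℝ) < 1 + x) :
    HasDerivAt (fun y : ℝ => 2 * y * Real.log (1 + y) ^ k
        + y ^ 2 * ((k : ℝ) * Real.log (1 + y) ^ (k - 1) * (1 + y)⁻¹))
      (2 * Real.log (1 + x) ^ k
        + 4 * x * ((k : ℝ) * Real.log (1 + x) ^ (k - 1) * (1 + x)⁻¹)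
        + x ^ 2 * ((k : ℝ) * (((k - 1 : ℕ) : ℝ) * Real.log (1 + x) ^ (k - 1 - 1)
            * (1 + x)⁻¹ * (1 + x)⁻¹ - Real.log (1 + x) ^ (k - 1) / (1 + x) ^ 2))) x := by
  have h1 : HasDerivAt (fun y : ℝ => 1 + y) 1 x := by
    simpa using (hasDerivAt_id x).const_add 1
  have hlog : HasDerivAt (fun y : ℝ => Real.log (1 + y)) ((1 + x)⁻¹) x := by
    exact ((Real.hasDerivAt_log (ne_of_gt hx)).comp x h1).congr_deriv (mul_one _)
  have hinv : HasDerivAt (fun y : ℝ => (1 + y)⁻¹) (-1 / (1 + x) ^ 2) x := by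
    exact h1.inv (ne_of_gt hx)
  have hA := ((hasDerivAt_id x).const_mul 2).mul (hlog.pow k)
  have hB := (hasDerivAt_pow 2 x).mul (((hlog.pow (k-1)).mul hinv).const_mul (k:ℝ))
  have := hA.add hB
  convert this using 1
  · rfl
  · rfl
  · funext y; simp only [id, Pi.add_apply, Pi.mul_apply, Pi.pow_apply]; ring
  · push_cast
    simp only [id, Pi.add_apply, Pi.mul_apply, Pi.pow_apply]
    ring

theorem stmt_3 (d : ℕ) (hd : 1 ≤ d) :
    ConvexOn ℝ (Set.Ici (0 : ℝ))
      (fun x : ℝ => x ^ 2 * (Real.log (1 + x)) ^ (d - 1)) := by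
  set k := d - 1 with hk
  rcases Nat.eq_zero_or_pos k with hk0 | hk1
  · simp only [hk0, pow_zero, mul_one]
    exact (convexOn_pow 2)
  -- continuity
  have hcont : ContinuousOn (fun x : ℝ => x ^ 2 * Real.log (1 + x) ^ k) (Set.Ici 0) := by
    apply ContinuousOn.mul (by fun_prop)
    apply ContinuousOn.pow
    apply Real.continuousOn_log.comp (by fun_prop)
    intro x hx
    simp only [Set.mem_Ici] at hx
    simp only [Set.mem_compl_iff, Set.mem_singleton_iff]
    positivity
  apply convexOn_of_hasDerivWithinAt2_nonneg (f' := fun x =>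
      2 * x * Real.log (1 + x) ^ k + x ^ 2 * ((k : ℝ) * Real.log (1 + x) ^ (k - 1) * (1 + x)⁻¹))
    (f'' := fun x =>
      2 * Real.log (1 + x) ^ k
        + 4 * x * ((k : ℝ) * Real.log (1 + x) ^ (k - 1) * (1 + x)⁻¹)
        + x ^ 2 * ((k : ℝ) * (((k - 1 : ℕ) : ℝ) * Real.log (1 + x) ^ (k - 1 - 1)
            * (1 + x)⁻¹ * (1 + x)⁻¹ - Real.log (1 + x) ^ (k - 1) / (1 + x) ^ 2)))
    (convex_Ici 0) hcont
  · intro x hx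
    rw [interior_Ici] at hx
    exact (d1 k (by simp only [Set.mem_Ioi] at hx; linarith)).hasDerivWithinAt
  · intro x hx
    rw [interior_Ici] at hx
    exact (d2 k (by simp only [Set.mem_Ioi] at hx; linarith)).hasDerivWithinAt
  · intro x hx
    rw [interior_Ici, Set.mem_Ioi] at hx
    have h1x : (0:ℝ) < 1 + x := by linarith
    set L := Real.log (1 + x) with hL
    have hLpos : 0 < L := Real.log_pos (by linarith)
    have hu : 0 < (1 + x)⁻¹ := by positivity
    have hxu : x * (1 + x)⁻¹ ≤ 1 := by
      rw [mul_inv_le_iff₀ h1x]; linarith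
    have hA : 0 < L ^ (k - 1) := pow_pos hLpos _
    have hB : 0 ≤ L ^ (k - 1 - 1) := le_of_lt (pow_pos hLpos _)
    have hkr : 0 ≤ (k : ℝ) := Nat.cast_nonneg k
    have hk1r : 0 ≤ ((k - 1 : ℕ) : ℝ) := Nat.cast_nonneg _
    have hpow : L ^ k = L ^ (k - 1) * L := by
      rw [← pow_succ, Nat.sub_add_cancel hk1]
    have hsq : (1 + x)⁻¹ * (1 + x)⁻¹ = ((1 + x) ^ 2)⁻¹ := by
      rw [sq, mul_inv]
    rw [hpow, div_eq_mul_inv, ← hsq]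
    nlinarith [mul_pos (mul_pos hA hu) (mul_pos hu (by positivity : (0:ℝ) < x)),
      mul_nonneg (mul_nonneg (mul_nonneg hkr hk1r) hB) (le_of_lt (mul_pos hu hu)),
      mul_nonneg (mul_nonneg hkr hA.le) (mul_nonneg hu.le (by positivity : (0:ℝ) ≤ x)),
      mul_le_of_le_one_right (mul_nonneg (mul_nonneg (mul_nonneg hkr hA.le) hu.le) hx.le) hxu,
      mul_nonneg hA.le hLpos.le]
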